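/- arXiv:1705.06148 — 4 statements merged into one kernel-verified Lean document; each statement's English description precedes it below -/
import Mathlib

section
/- Let W be a real n²×n² matrix, c ∈ ℝ^(n²), d ∈ ℝ, and define E(X,a) = xᵀWx + cᵀx + d − a‖X‖_F² + a·n, where x is the column stack of X. Then for all doubly stochastic n×n matrices X and all real a < b, we have E(X,a) ≤ E(X,b), with equality if and only if X is a permutation matrix. -/
open Matrix

def IsPermMatrix {n : ℕ} (X : Matrix (Fin n) (Fin n) ℝ) : Prop :=
  ∃ σ : Equiv.Perm (Fin n), ∀ i j, X i j = if σ i = j then 1 else 0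

def IsDoublyStochastic {n : ℕ} (X : Matrix (Fin n) (Fin n) ℝ) : Prop :=
  (∀ i j, 0 ≤ X i j) ∧ (∀ i, ∑ j, X i j = 1) ∧ (∀ j, ∑ i, X i j = 1)

/-- Column stack of a matrix, as a vector indexed by `Fin n × Fin n`. -/
def colStack {n : ℕ} (X : Matrix (Fin n) (Fin n) ℝ) : Fin n × Fin n → ℝ :=
  fun p => X p.1 p.2

/-- The one-parameter family of energies
`E(X,a) = xᵀWx + cᵀx + d − a‖X‖_F² + a·n`, `x` the column stack of `X`. -/
def energy {n : ℕ} (W : Matrix (Fin n × Fin n) (Fin n × Fin n) ℝ)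
    (c : Fin n × Fin n → ℝ) (d : ℝ) (X : Matrix (Fin n) (Fin n) ℝ) (a : ℝ) : ℝ :=
  colStack X ⬝ᵥ (W *ᵥ colStack X) + c ⬝ᵥ colStack X + d
    - a * (∑ i, ∑ j, (X i j) ^ 2) + a * n
lemma key {n : ℕ} {X : Matrix (Fin n) (Fin n) ℝ} (hX : IsDoublyStochastic X) :
    (∑ i, ∑ j, (X i j) ^ 2) ≤ n ∧
      ((∑ i, ∑ j, (X i j) ^ 2) = n ↔ IsPermMatrix X) := by
  obtain ⟨hpos, hrow, hcol⟩ := hX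
  have hle1 : ∀ i j, X i j ≤ 1 := by
    intro i j
    calc X i j ≤ ∑ j', X i j' := Finset.single_le_sum (fun j' _ => hpos i j') (by simp)
    _ = 1 := hrow i
  have hsq : ∀ i j, X i j ^ 2 ≤ X i j := by
    intro i j
    nlinarith [hpos i j, hle1 i j]
  have htot : (∑ i, ∑ j, X i j) = (n : ℝ) := by
    simp [hrow]
  have hS : (∑ i, ∑ j, (X i j) ^ 2) ≤ n := by
    calc (∑ i, ∑ j, (X i j) ^ 2) ≤ ∑ i, ∑ j, X i j :=
      Finset.sum_le_sum (fun i _ => Finset.sum_le_sum (fun j _ => hsq i j))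
    _ = n := htot
  refine ⟨hS, ?_, ?_⟩
  · intro hEq
    -- each entry is 0 or 1
    have hdiff : (∑ i, ∑ j, (X i j - X i j ^ 2)) = 0 := by
      simp only [Finset.sum_sub_distrib]
      rw [htot, hEq]; ring
    have h01 : ∀ i j, X i j = 0 ∨ X i j = 1 := by
      intro i j
      have hz : X i j - X i j ^ 2 = 0 := by
        have := Finset.sum_eq_zero_iff_of_nonneg
          (f := fun i => ∑ j, (X i j - X i j ^ 2)) (s := Finset.univ)
          (fun i _ => Finset.sum_nonneg (fun j _ => sub_nonneg.mpr (hsq i j)))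
        have h1 := (this.mp hdiff) i (by simp)
        have := Finset.sum_eq_zero_iff_of_nonneg
          (f := fun j => X i j - X i j ^ 2) (s := Finset.univ)
          (fun j _ => sub_nonneg.mpr (hsq i j))
        exact (this.mp h1) j (by simp)
      have : X i j * (1 - X i j) = 0 := by ring_nf; nlinarith [hz]
      rcases mul_eq_zero.mp this with h | h
      · exact Or.inl h
      · exact Or.inr (by linarith)
    -- for each row, exactly one 1
    have hexists : ∀ i, ∃ j, X i j = 1 ∧ ∀ j', j' ≠ j → X i j' = 0 := by
      intro i
      have hne : ∃ j, X i j ≠ 0 := by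
        by_contra h
        push_neg at h
        have := hrow i
        simp [h] at this
      obtain ⟨j, hj⟩ := hne
      have hj1 : X i j = 1 := (h01 i j).resolve_left hj
      refine ⟨j, hj1, ?_⟩
      intro j' hj'
      by_contra hne'
      have hj'1 : X i j' = 1 := (h01 i j').resolve_left hne'
      have : (2 : ℝ) ≤ ∑ j'', X i j'' := by
        have := Finset.add_sum_erase Finset.univ (X i) (Finset.mem_univ j)
        have h2 := Finset.single_le_sum (f := X i)
          (fun k _ => hpos i k) (s := Finset.univ.erase j)
          (Finset.mem_erase.mpr ⟨hj', Finset.mem_univ j'⟩)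
        linarith [this, h2, hj1, hj'1]
      rw [hrow i] at this; linarith
    choose σ hσ1 hσ0 using hexists
    have hinj : Function.Injective σ := by
      intro i i' hii
      by_contra hne
      have : (2 : ℝ) ≤ ∑ k, X k (σ i) := by
        have := Finset.add_sum_erase Finset.univ (fun k => X k (σ i)) (Finset.mem_univ i)
        have h2 := Finset.single_le_sum (f := fun k => X k (σ i))
          (fun k _ => hpos k (σ i)) (s := Finset.univ.erase i)
          (Finset.mem_erase.mpr ⟨Ne.symm hne, Finset.mem_univ i'⟩)
        have h3 : X i' (σ i) = 1 := by rw [hii]; exact hσ1 i'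
        linarith [hσ1 i]
      rw [hcol (σ i)] at this; linarith
    refine ⟨Equiv.ofBijective σ (Finite.injective_iff_bijective.mp hinj), ?_⟩
    intro i j
    simp only [Equiv.ofBijective_apply]
    by_cases h : σ i = j
    · subst h; simp [hσ1 i]
    · simp [h, hσ0 i j (fun hh => h hh.symm)]
  · rintro ⟨σ, hσ⟩
    have : ∀ i, ∑ j, (X i j) ^ 2 = 1 := by
      intro i
      rw [Finset.sum_eq_single (σ i)]
      · simp [hσ]
      · intro j _ hj; rw [hσ]; simp [Ne.symm hj]
      · simp
    simp [this]

theorem stmt_2 {n : ℕ} (W : Matrix (Fin n × Fin n) (Fin n × Fin n) ℝ)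
    (c : Fin n × Fin n → ℝ) (d : ℝ) (X : Matrix (Fin n) (Fin n) ℝ)
    (hX : IsDoublyStochastic X) (a b : ℝ) (hab : a < b) :
    energy W c d X a ≤ energy W c d X b ∧
      (energy W c d X a = energy W c d X b ↔ IsPermMatrix X) := by
  obtain ⟨hS, hiff⟩ := key hX
  unfold energy
  constructor
  · nlinarith [hS]
  · constructor
    · intro h
      apply hiff.mp
      nlinarith [hS, h]
    · intro h
      have := hiff.mpr h
      rw [this]; ring
end

section
/- Let X be a doubly stochastic matrix minimizing E(·,a) over doubly stochastic matrices for some a > λ̄_max. Then X is a permutation matrix. -/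
open Matrix

/-! ### Auxiliary lemmas -/

lemma rayleigh_bound {k : ℕ} (M : Matrix (Fin k) (Fin k) ℝ) (hM : M.IsHermitian) {lam : ℝ}
    (hub : ∀ μ, Module.End.HasEigenvalue (Matrix.toLin' M) μ → μ ≤ lam) (z : Fin k → ℝ) :
    z ⬝ᵥ (M *ᵥ z) ≤ lam * (z ⬝ᵥ z) := by
  have heig : ∀ j, hM.eigenvalues j ≤ lam := by
    intro j
    apply hub
    apply Module.End.hasEigenvalue_of_hasEigenvector (x := (hM.eigenvectorBasis j : Fin k → ℝ))
    constructor
    · rw [Module.End.mem_eigenspace_iff]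
      exact (Matrix.toLin'_apply M _).trans (hM.mulVec_eigenvectorBasis j)
    · intro h
      exact (hM.eigenvectorBasis.toBasis.ne_zero j) (by ext i; exact congrFun h i)
  set U : Matrix (Fin k) (Fin k) ℝ := (hM.eigenvectorUnitary : Matrix (Fin k) (Fin k) ℝ) with hU
  have hUst : U * star U = 1 := by
    have := hM.eigenvectorUnitary.2
    rw [Matrix.mem_unitaryGroup_iff] at this
    exact this
  have hstarT : star U = Uᵀ := by
    ext i j; simp [Matrix.star_apply]
  set w : Fin k → ℝ := Uᵀ *ᵥ z with hw
  have hdot : ∀ u : Fin k → ℝ, z ⬝ᵥ (U *ᵥ u) = w ⬝ᵥ u := by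
    intro u
    rw [hw, Matrix.mulVec_transpose, ← Matrix.dotProduct_mulVec]
  have hww : w ⬝ᵥ w = z ⬝ᵥ z := by
    rw [hw]
    nth_rewrite 1 [Matrix.mulVec_transpose]
    rw [← Matrix.dotProduct_mulVec, Matrix.mulVec_mulVec, ← hstarT, hUst, Matrix.one_mulVec]
  have hid : RCLike.ofReal ∘ hM.eigenvalues = hM.eigenvalues := by
    ext i; simp
  have hspec := hM.spectral_theorem
  rw [hid] at hspec
  calc z ⬝ᵥ (M *ᵥ z) = w ⬝ᵥ (Matrix.diagonal hM.eigenvalues *ᵥ w) := by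
        nth_rewrite 1 [hspec]
        simp only [Unitary.conjStarAlgAut_apply, Unitary.coe_star]
        rw [← Matrix.mulVec_mulVec, ← Matrix.mulVec_mulVec, hdot, hstarT, ← hw]
    _ = ∑ i, hM.eigenvalues i * (w i)^2 := by
        rw [dotProduct]
        exact Finset.sum_congr rfl fun i _ => by rw [Matrix.mulVec_diagonal]; ring
    _ ≤ ∑ i, lam * (w i)^2 := by
        apply Finset.sum_le_sum
        intro i _
        exact mul_le_mul_of_nonneg_right (heig i) (sq_nonneg _)
    _ = lam * (w ⬝ᵥ w) := by
        rw [dotProduct, Finset.mul_sum]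
        exact Finset.sum_congr rfl fun i _ => by ring
    _ = lam * (z ⬝ᵥ z) := by rw [hww]

lemma symm_dot {m : Type*} [Fintype m] (W : Matrix m m ℝ) (hW : W.IsSymm) (y z : m → ℝ) :
    y ⬝ᵥ (W *ᵥ z) = z ⬝ᵥ (W *ᵥ y) := by
  rw [Matrix.dotProduct_mulVec, ← Matrix.mulVec_transpose, hW.eq, dotProduct_comm]

lemma quad_expand {m : Type*} [Fintype m] (W : Matrix m m ℝ) (hW : W.IsSymm) (y z : m → ℝ)
    (t s : ℝ) :
    (t • y + s • z) ⬝ᵥ (W *ᵥ (t • y + s • z)) =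
      t^2 * (y ⬝ᵥ (W *ᵥ y)) + 2*t*s*(y ⬝ᵥ (W *ᵥ z)) + s^2 * (z ⬝ᵥ (W *ᵥ z)) := by
  simp only [Matrix.mulVec_add, Matrix.mulVec_smul, dotProduct_add,
    add_dotProduct, dotProduct_smul, smul_dotProduct, smul_eq_mul]
  rw [symm_dot W hW z y]
  ring

lemma quad_sub {m : Type*} [Fintype m] (W : Matrix m m ℝ) (hW : W.IsSymm) (y z : m → ℝ) :
    (y - z) ⬝ᵥ (W *ᵥ (y - z)) =
      (y ⬝ᵥ (W *ᵥ y)) - 2*(y ⬝ᵥ (W *ᵥ z)) + (z ⬝ᵥ (W *ᵥ z)) := by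
  simp only [Matrix.mulVec_sub, dotProduct_sub, sub_dotProduct]
  rw [symm_dot W hW z y]
  ring

lemma dot_expand {m : Type*} [Fintype m] (y z : m → ℝ) (t s : ℝ) :
    (t • y + s • z) ⬝ᵥ (t • y + s • z) =
      t^2 * (y ⬝ᵥ y) + 2*t*s*(y ⬝ᵥ z) + s^2 * (z ⬝ᵥ z) := by
  simp only [dotProduct_add, add_dotProduct, dotProduct_smul,
    smul_dotProduct, smul_eq_mul]
  rw [dotProduct_comm z y]
  ring

lemma dot_sub {m : Type*} [Fintype m] (y z : m → ℝ) :
    (y - z) ⬝ᵥ (y - z) = (y ⬝ᵥ y) - 2*(y ⬝ᵥ z) + (z ⬝ᵥ z) := by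
  simp only [dotProduct_sub, sub_dotProduct]
  rw [dotProduct_comm z y]
  ring

lemma ds_iff {n : ℕ} (X : Matrix (Fin n) (Fin n) ℝ) :
    IsDoublyStochastic X ↔ X ∈ doublyStochastic ℝ (Fin n) := by
  rw [mem_doublyStochastic_iff_sum]; exact Iff.rfl

lemma perm_isPerm {n : ℕ} (σ : Equiv.Perm (Fin n)) : IsPermMatrix (σ.permMatrix ℝ) := by
  refine ⟨σ, fun i j => ?_⟩
  simp [Equiv.Perm.permMatrix, PEquiv.toMatrix_apply, Equiv.toPEquiv_apply]

lemma decomp_lemma {n : ℕ} (X : Matrix (Fin n) (Fin n) ℝ)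
    (hX : X ∈ doublyStochastic ℝ (Fin n)) :
    ∃ (σ₀ : Equiv.Perm (Fin n)) (t : ℝ) (Z : Matrix (Fin n) (Fin n) ℝ),
      0 < t ∧ t ≤ 1 ∧ Z ∈ doublyStochastic ℝ (Fin n) ∧
      X = t • σ₀.permMatrix ℝ + (1 - t) • Z := by
  obtain ⟨w, hw0, hw1, hwX⟩ := exists_eq_sum_perm_of_mem_doublyStochastic hX
  have hex : ∃ σ₀, 0 < w σ₀ := by
    by_contra h
    push_neg at h
    have : (1:ℝ) = 0 := by
      rw [← hw1]; exact Finset.sum_eq_zero fun σ _ => le_antisymm (h σ) (hw0 σ)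
    norm_num at this
  obtain ⟨σ₀, ht0⟩ := hex
  set t := w σ₀ with htdef
  have ht1 : t ≤ 1 := by
    rw [← hw1]
    exact Finset.single_le_sum (fun σ _ => hw0 σ) (Finset.mem_univ σ₀)
  rcases eq_or_lt_of_le ht1 with h1 | h1
  · refine ⟨σ₀, t, σ₀.permMatrix ℝ, ht0, ht1, permMatrix_mem_doublyStochastic, ?_⟩
    have hz : ∀ σ, σ ≠ σ₀ → w σ = 0 := by
      intro σ hσ
      by_contra hne
      have hpos : 0 < w σ := lt_of_le_of_ne (hw0 σ) (Ne.symm hne)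
      have : 1 < ∑ σ', w σ' := by
        calc 1 = t := h1.symm
        _ < t + w σ := by linarith
        _ = ∑ σ' ∈ {σ₀, σ}, w σ' := by
            rw [Finset.sum_pair (Ne.symm hσ)]
        _ ≤ ∑ σ', w σ' := Finset.sum_le_sum_of_subset_of_nonneg (Finset.subset_univ _)
            (fun σ' _ _ => hw0 σ')
      rw [hw1] at this; norm_num at this
    rw [← hwX, ← h1]
    rw [Finset.sum_eq_single σ₀ (fun σ _ hσ => by rw [hz σ hσ, zero_smul]) (by simp)]
    simp [← h1]
    rfl
  · set v : Equiv.Perm (Fin n) → ℝ := fun σ => (1-t)⁻¹ * (if σ = σ₀ then 0 else w σ) with hv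
    have h1t : (0:ℝ) < 1 - t := by linarith
    have hvs : ∑ σ, v σ = 1 := by
      have : ∑ σ, (if σ = σ₀ then 0 else w σ) = 1 - t := by
        have := Finset.sum_ite_eq' Finset.univ σ₀ w
        simp only [Finset.mem_univ, if_true] at this
        have h2 : ∑ σ, ((if σ = σ₀ then 0 else w σ) + (if σ = σ₀ then w σ else 0)) = 1 := by
          rw [← hw1]; exact Finset.sum_congr rfl fun σ _ => by split <;> simp_all
        rw [Finset.sum_add_distrib] at h2
        simp only [Finset.sum_ite_eq', Finset.mem_univ, if_true] at h2
        linarith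
      rw [hv, ← Finset.mul_sum, this, inv_mul_cancel₀ (ne_of_gt h1t)]
    set Z : Matrix (Fin n) (Fin n) ℝ := ∑ σ, v σ • σ.permMatrix ℝ with hZ
    have hZds : Z ∈ doublyStochastic ℝ (Fin n) := by
      have : Z ∈ (doublyStochastic ℝ (Fin n) : Set (Matrix (Fin n) (Fin n) ℝ)) := by
        rw [doublyStochastic_eq_convexHull_permMatrix]
        exact mem_convexHull_of_exists_fintype v (·.permMatrix ℝ)
          (fun σ => mul_nonneg (le_of_lt (inv_pos.2 h1t))
            (by by_cases h : σ = σ₀ <;> simp [h, hw0 σ])) hvs (by simp) hZ.symm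
      exact this
    refine ⟨σ₀, t, Z, ht0, ht1, hZds, ?_⟩
    rw [← hwX, hZ, Finset.smul_sum]
    have : ∀ σ, w σ • σ.permMatrix ℝ =
        (if σ = σ₀ then t else 0) • σ.permMatrix ℝ + ((1-t) * v σ) • σ.permMatrix ℝ := by
      intro σ
      rw [← add_smul]
      congr 1
      by_cases h : σ = σ₀
      · simp [h, hv, htdef]
      · simp only [h, if_false, hv, if_neg h]
        rw [zero_add, ← mul_assoc, mul_inv_cancel₀ (ne_of_gt h1t), one_mul]
    rw [Finset.sum_congr rfl fun σ _ => this σ, Finset.sum_add_distrib]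
    congr 1
    · simp only [ite_smul, zero_smul, Finset.sum_ite_eq', Finset.mem_univ, if_true]
    · exact Finset.sum_congr rfl fun σ _ => (smul_smul _ _ _).symm

lemma colStack_sq {n : ℕ} (A : Matrix (Fin n) (Fin n) ℝ) :
    ∑ i, ∑ j, (A i j)^2 = colStack A ⬝ᵥ colStack A := by
  rw [dotProduct, Fintype.sum_prod_type]
  exact Finset.sum_congr rfl fun i _ => Finset.sum_congr rfl fun j _ => by simp [colStack, sq]

theorem stmt_10 {n k : ℕ} (W : Matrix (Fin n × Fin n) (Fin n × Fin n) ℝ) (hW : W.IsSymm)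
    (c : Fin n × Fin n → ℝ) (d : ℝ)
    (F : Matrix (Fin n × Fin n) (Fin k) ℝ) (hF : Fᵀ * F = 1)
    (hker : ∀ y : Fin n × Fin n → ℝ, (∃ z, F *ᵥ z = y) ↔
      ((∀ i, ∑ j, y (i, j) = 0) ∧ (∀ j, ∑ i, y (i, j) = 0)))
    (lamMax : ℝ)
    (hmax : IsGreatest {μ | Module.End.HasEigenvalue (Matrix.toLin' (Fᵀ * W * F)) μ} lamMax)
    (a : ℝ) (ha : lamMax < a)
    (X : Matrix (Fin n) (Fin n) ℝ) (hX : IsDoublyStochastic X)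
    (hXmin : ∀ Y, IsDoublyStochastic Y → energy W c d X a ≤ energy W c d Y a) :
    IsPermMatrix X := by
  obtain ⟨σ₀, t, Z, ht0, ht1, hZds', hXd⟩ := decomp_lemma X ((ds_iff X).1 hX)
  set Y : Matrix (Fin n) (Fin n) ℝ := σ₀.permMatrix ℝ with hY
  have hYds : IsDoublyStochastic Y := (ds_iff Y).2 permMatrix_mem_doublyStochastic
  have hZds : IsDoublyStochastic Z := (ds_iff Z).2 hZds'
  -- reduce to showing Y = Z (or t = 1)
  suffices hYZ : Y = Z ∨ t = 1 by
    have hXY : X = Y := by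
      rcases hYZ with h | h
      · rw [hXd, h, ← add_smul]; ring_nf; rw [one_smul]
      · rw [hXd, h]; simp
    rw [hXY, hY]; exact perm_isPerm σ₀
  by_cases hteq : t = 1
  · exact Or.inr hteq
  have h1t : 0 < 1 - t := lt_of_le_of_ne (by linarith) (by intro h; exact hteq (by linarith))
  left
  by_contra hne
  -- set up the quadratic form
  set q : (Fin n × Fin n → ℝ) → ℝ := fun v => v ⬝ᵥ (W *ᵥ v) - a * (v ⬝ᵥ v) with hq
  have henergy : ∀ A : Matrix (Fin n) (Fin n) ℝ,
      energy W c d A a = q (colStack A) + (c ⬝ᵥ colStack A + d + a*n) := by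
    intro A
    rw [energy, hq, colStack_sq]
    ring
  set yv := colStack Y with hyv
  set zv := colStack Z with hzv
  have hcol_add : colStack (t • Y + (1-t) • Z) = t • yv + (1-t) • zv := rfl
  have hcol_lin : c ⬝ᵥ (t • yv + (1-t) • zv) = t * (c ⬝ᵥ yv) + (1-t) * (c ⬝ᵥ zv) := by
    simp only [dotProduct_add, dotProduct_smul, smul_eq_mul]
  have hconc : energy W c d X a = t * energy W c d Y a + (1-t) * energy W c d Z a
      - t*(1-t) * q (yv - zv) := by
    rw [hXd, henergy, henergy, henergy, hcol_add, hq]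
    simp only
    rw [quad_expand W hW yv zv t (1-t), dot_expand yv zv t (1-t),
      quad_sub W hW yv zv, dot_sub yv zv, hcol_lin]
    ring
  have hEY := hXmin Y hYds
  have hEZ := hXmin Z hZds
  have ht1' : t < 1 := by linarith
  have hqnn : 0 ≤ q (yv - zv) := by nlinarith [mul_pos ht0 h1t]
  -- kernel direction
  have hv0 : yv - zv ≠ 0 := by
    intro h
    apply hne
    ext i j
    have := congrFun h (i, j)
    simpa [hyv, hzv, colStack, sub_eq_zero] using this
  have hkv : (∀ i, ∑ j, (yv - zv) (i, j) = 0) ∧ (∀ j, ∑ i, (yv - zv) (i, j) = 0) := by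
    constructor
    · intro i
      simp only [Pi.sub_apply, hyv, hzv, colStack, Finset.sum_sub_distrib]
      rw [hYds.2.1 i, hZds.2.1 i, sub_self]
    · intro j
      simp only [Pi.sub_apply, hyv, hzv, colStack, Finset.sum_sub_distrib]
      rw [hYds.2.2 j, hZds.2.2 j, sub_self]
  obtain ⟨zz, hzz⟩ := (hker (yv - zv)).2 hkv
  have hzz0 : zz ≠ 0 := by
    intro h
    rw [h, Matrix.mulVec_zero] at hzz
    exact hv0 hzz.symm
  -- transfer the quadratic form through F
  have hdotF : ∀ u : Fin n × Fin n → ℝ, (F *ᵥ zz) ⬝ᵥ u = zz ⬝ᵥ (Fᵀ *ᵥ u) := by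
    intro u
    rw [dotProduct_comm, Matrix.dotProduct_mulVec, ← Matrix.mulVec_transpose,
      dotProduct_comm]
  have hq1 : (yv - zv) ⬝ᵥ (W *ᵥ (yv - zv)) = zz ⬝ᵥ ((Fᵀ * W * F) *ᵥ zz) := by
    rw [← hzz, hdotF, Matrix.mulVec_mulVec, Matrix.mulVec_mulVec, Matrix.mul_assoc,
      ← Matrix.mul_assoc]
  have hq2 : (yv - zv) ⬝ᵥ (yv - zv) = zz ⬝ᵥ zz := by
    rw [← hzz, hdotF, Matrix.mulVec_mulVec, hF, Matrix.one_mulVec]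
  have hherm : (Fᵀ * W * F).IsHermitian := by
    have hsymm : (Fᵀ * W * F).IsSymm := by
      rw [Matrix.IsSymm]
      rw [Matrix.transpose_mul, Matrix.transpose_mul, Matrix.transpose_transpose, hW.eq,
        Matrix.mul_assoc]
    rw [Matrix.IsHermitian]
    ext i j
    rw [Matrix.conjTranspose_apply, star_trivial]
    exact (Matrix.transpose_apply _ i j).symm.trans (congrFun (congrFun hsymm i) j)
  have hray := rayleigh_bound (Fᵀ * W * F) hherm (fun μ h => hmax.2 h) zz
  have hzzpos : 0 < zz ⬝ᵥ zz := by
    have hnn : 0 ≤ zz ⬝ᵥ zz := by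
      rw [dotProduct]
      exact Finset.sum_nonneg fun i _ => mul_self_nonneg _
    rcases lt_or_eq_of_le hnn with h | h
    · exact h
    · exact absurd (dotProduct_self_eq_zero.1 h.symm) hzz0
  have hqval : q (yv - zv) = zz ⬝ᵥ ((Fᵀ * W * F) *ᵥ zz) - a * (zz ⬝ᵥ zz) := by
    show (yv - zv) ⬝ᵥ (W *ᵥ (yv - zv)) - a * ((yv - zv) ⬝ᵥ (yv - zv)) = _
    rw [hq1, hq2]
  have : q (yv - zv) < 0 := by
    rw [hqval]
    nlinarith [hray, hzzpos, ha]
  linarith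
end

section
/- Let x be the minimizer of the DS++ relaxation with ‖X‖_F² ≤ n, let v be a unit eigenvector of FᵀWF for the eigenvalue λ̄_min, and set u = Fv and Y = xxᵀ + αuuᵀ with α = n − ‖x‖² ≥ 0. Then Y satisfies: tr(Y) = n, Y ⪰ xxᵀ, AY = bxᵀ, and tr(WY) + cᵀx = xᵀWx + cᵀx + (n − ‖x‖²)λ̄_min. -/
open Matrix

lemma trace_vecMulVec' {p : Type*} [Fintype p] (a b : p → ℝ) :
    (vecMulVec a b).trace = a ⬝ᵥ b := by
  simp [Matrix.trace, vecMulVec_apply, dotProduct, Matrix.diag]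

lemma mul_vecMulVec' {p q : Type*} [Fintype p] [Fintype q]
    (A : Matrix q p ℝ) (a b : p → ℝ) :
    A * vecMulVec a b = vecMulVec (A *ᵥ a) b := by
  ext i j
  simp [Matrix.mul_apply, vecMulVec_apply, mulVec, dotProduct, Finset.sum_mul, mul_assoc]

lemma trace_mul_vecMulVec' {p : Type*} [Fintype p] (W : Matrix p p ℝ) (a b : p → ℝ) :
    (W * vecMulVec a b).trace = b ⬝ᵥ (W *ᵥ a) := by
  rw [mul_vecMulVec', trace_vecMulVec', dotProduct_comm]

lemma posSemidef_smul_vecMulVec {p : Type*} [Fintype p] (u : p → ℝ) {α : ℝ} (hα : 0 ≤ α) :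
    (α • vecMulVec u u).PosSemidef := by
  rw [posSemidef_iff_dotProduct_mulVec]
  constructor
  · ext i j
    simp [vecMulVec_apply, Matrix.conjTranspose_apply, mul_comm]
  · intro y
    have h : y ⬝ᵥ ((α • vecMulVec u u) *ᵥ y) = α * (u ⬝ᵥ y) ^ 2 := by
      simp only [smul_mulVec, dotProduct_smul, smul_eq_mul]
      congr 1
      simp [vecMulVec_apply, mulVec, dotProduct, Finset.sum_mul, Finset.mul_sum, sq]
      rw [Finset.sum_comm]
      congr 1; ext i; congr 1; ext j; ring
    simp only [RCLike.star_def, starRingEnd_apply, star_trivial, h]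
    positivity

theorem stmt_14 {n m k : ℕ}
    (W : Matrix (Fin n × Fin n) (Fin n × Fin n) ℝ) (hW : W.IsSymm)
    (c : Fin n × Fin n → ℝ) (d : ℝ)
    (A : Matrix (Fin m) (Fin n × Fin n) ℝ) (b : Fin m → ℝ)
    -- `Ax = b` encodes the doubly stochastic equality constraints
    (hAb : ∀ Z : Matrix (Fin n) (Fin n) ℝ,
      A *ᵥ colStack Z = b ↔ ((∀ i, ∑ j, Z i j = 1) ∧ (∀ j, ∑ i, Z i j = 1)))
    -- `F` is an orthonormal basis of `ker A`
    (F : Matrix (Fin n × Fin n) (Fin k) ℝ) (hF : Fᵀ * F = 1)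
    (hker : ∀ y : Fin n × Fin n → ℝ, (∃ z, F *ᵥ z = y) ↔ A *ᵥ y = 0)
    (lamMin : ℝ)
    (hmin : IsLeast {μ | Module.End.HasEigenvalue (Matrix.toLin' (Fᵀ * W * F)) μ} lamMin)
    -- `X` is a minimizer of the DS++ relaxation, with column stack `x`
    (X : Matrix (Fin n) (Fin n) ℝ) (hX : IsDoublyStochastic X)
    (hXmin : ∀ Z, IsDoublyStochastic Z → energy W c d X lamMin ≤ energy W c d Z lamMin)
    (hfrob : colStack X ⬝ᵥ colStack X ≤ n)
    -- `v` is a unit eigenvector of `FᵀWF` for the eigenvalue `λ̄_min`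
    (v : Fin k → ℝ) (hv : (Fᵀ * W * F) *ᵥ v = lamMin • v) (hvunit : v ⬝ᵥ v = 1) :
    0 ≤ (n : ℝ) - colStack X ⬝ᵥ colStack X ∧
    (Matrix.vecMulVec (colStack X) (colStack X)
        + ((n : ℝ) - colStack X ⬝ᵥ colStack X) • Matrix.vecMulVec (F *ᵥ v) (F *ᵥ v)).trace
      = (n : ℝ) ∧
    ((Matrix.vecMulVec (colStack X) (colStack X)
        + ((n : ℝ) - colStack X ⬝ᵥ colStack X) • Matrix.vecMulVec (F *ᵥ v) (F *ᵥ v))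
      - Matrix.vecMulVec (colStack X) (colStack X)).PosSemidef ∧
    A * (Matrix.vecMulVec (colStack X) (colStack X)
        + ((n : ℝ) - colStack X ⬝ᵥ colStack X) • Matrix.vecMulVec (F *ᵥ v) (F *ᵥ v))
      = Matrix.vecMulVec b (colStack X) ∧
    (W * (Matrix.vecMulVec (colStack X) (colStack X)
        + ((n : ℝ) - colStack X ⬝ᵥ colStack X) • Matrix.vecMulVec (F *ᵥ v) (F *ᵥ v))).trace
        + c ⬝ᵥ colStack X
      = colStack X ⬝ᵥ (W *ᵥ colStack X) + c ⬝ᵥ colStack X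
        + ((n : ℝ) - colStack X ⬝ᵥ colStack X) * lamMin := by
  set x := colStack X with hx
  set u := F *ᵥ v with hu
  have hα : 0 ≤ (n : ℝ) - x ⬝ᵥ x := by linarith
  have huu : u ⬝ᵥ u = 1 := by
    rw [hu, dotProduct_mulVec, ← mulVec_transpose, mulVec_mulVec, hF, one_mulVec, hvunit]
  have hWu : u ⬝ᵥ (W *ᵥ u) = lamMin := by
    have h1 : W *ᵥ (F *ᵥ v) = (W * F) *ᵥ v := by rw [mulVec_mulVec]
    rw [hu, h1, dotProduct_mulVec, ← mulVec_transpose, mulVec_mulVec, transpose_mul,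
      hW.eq, Matrix.mul_assoc, ← Matrix.mul_assoc, hv]
    simp [hvunit]
  have hAx : A *ᵥ x = b := (hAb X).mpr ⟨hX.2.1, hX.2.2⟩
  have hAu : A *ᵥ u = 0 := (hker u).mp ⟨v, rfl⟩
  refine ⟨hα, ?_, ?_, ?_, ?_⟩
  · rw [trace_add, trace_smul, trace_vecMulVec', trace_vecMulVec', huu]
    simp
  · rw [add_sub_cancel_left]
    exact posSemidef_smul_vecMulVec u hα
  · rw [Matrix.mul_add, Matrix.mul_smul, mul_vecMulVec', mul_vecMulVec', hAx, hAu]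
    have h0 : vecMulVec (0 : Fin m → ℝ) u = 0 := by ext i j; simp [vecMulVec_apply]
    rw [h0, smul_zero, add_zero]
  · rw [Matrix.mul_add, Matrix.mul_smul, trace_add, trace_smul, trace_mul_vecMulVec',
      trace_mul_vecMulVec', hWu]
    simp only [smul_eq_mul]
    ring
end

section
/- Let p, q be linear polynomials on ℝ^m and suppose the symmetric PSD matrix Y − xxᵀ satisfies aᵀ(Y − xxᵀ)a = 0 where p(x) = aᵀx + β. Then for the product f = pq with q(x) = cᵀx + δ, the linearization satisfies f̄(x,Y) = p(x)q(x), i.e., the linearized product equals the true product. -/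
open Matrix

lemma trace_vecMulVec_mul {m : ℕ} (u v : Fin m → ℝ) (Y : Matrix (Fin m) (Fin m) ℝ) :
    (Matrix.vecMulVec u v * Y).trace = v ⬝ᵥ (Y *ᵥ u) := by
  simp [Matrix.trace, Matrix.mul_apply, Matrix.vecMulVec_apply, Matrix.mulVec, dotProduct,
    Finset.mul_sum, Finset.sum_mul]
  rw [Finset.sum_comm]
  congr 1; ext i; congr 1; ext j; ring

theorem stmt_16 {m : ℕ} (a c x : Fin m → ℝ) (β δ : ℝ)
    (Y : Matrix (Fin m) (Fin m) ℝ) (hY : (Y - Matrix.vecMulVec x x).PosSemidef)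
    (ha : a ⬝ᵥ ((Y - Matrix.vecMulVec x x) *ᵥ a) = 0) :
    (((1 / 2 : ℝ) • (Matrix.vecMulVec a c + Matrix.vecMulVec c a)) * Y).trace
        + (β • c + δ • a) ⬝ᵥ x + β * δ = (a ⬝ᵥ x + β) * (c ⬝ᵥ x + δ) := by
  have hMa : (Y - Matrix.vecMulVec x x) *ᵥ a = 0 :=
    (hY.dotProduct_mulVec_zero_iff a).mp (by simpa using ha)
  have hYa : Y *ᵥ a = (x ⬝ᵥ a) • x := by
    have h1 : Y *ᵥ a - Matrix.vecMulVec x x *ᵥ a = 0 := by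
      rw [← Matrix.sub_mulVec]; exact hMa
    have h2 : Matrix.vecMulVec x x *ᵥ a = (x ⬝ᵥ a) • x := by
      funext i
      simp only [Matrix.mulVec, Matrix.vecMulVec_apply, dotProduct, Pi.smul_apply, smul_eq_mul,
        Finset.sum_mul, Finset.mul_sum]
      congr 1; ext j; ring
    rw [← h2]; exact sub_eq_zero.mp h1
  have hsym : Yᵀ = Y := by
    have hx : (Matrix.vecMulVec x x)ᵀ = Matrix.vecMulVec x x := by
      ext i j; simp [Matrix.vecMulVec_apply, mul_comm]
    have h' : (Y - Matrix.vecMulVec x x)ᵀ = Y - Matrix.vecMulVec x x := by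
      have := hY.1.eq; rwa [Matrix.conjTranspose_eq_transpose_of_trivial] at this
    rw [Matrix.transpose_sub, hx] at h'
    have := congrArg (· + Matrix.vecMulVec x x) h'
    simpa using this
  have hkey : a ⬝ᵥ Y *ᵥ c = c ⬝ᵥ Y *ᵥ a := by
    rw [Matrix.dotProduct_mulVec, ← Matrix.mulVec_transpose, hsym, dotProduct_comm]
  rw [Matrix.smul_mul, Matrix.add_mul, Matrix.trace_smul, Matrix.trace_add,
    trace_vecMulVec_mul, trace_vecMulVec_mul, hkey, hYa]
  simp [dotProduct_smul, add_dotProduct, smul_dotProduct, dotProduct_comm x a]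
  ring
end
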